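/- arXiv:2107.08912 — 2 statements merged into one kernel-verified Lean document; each statement's English description precedes it below -/
import Mathlib

section
/- Let Q₁,…,Q_k be positive definite n×n matrices and p_{ij} > 0 for i < j. Then the Minkowski sum E(Q₁) ⊕ ⋯ ⊕ E(Q_k) is contained in the ellipsoid E(Q) with Q = Σ_i Q_i + Σ_{i<j} (p_{ij} Q_i + p_{ij}^{-1} Q_j). -/
open Matrix Pointwise Finset

/-- Ellipsoid with shape matrix `Q`. -/
def Ell {n : ℕ} (Q : Matrix (Fin n) (Fin n) ℝ) : Set (Fin n → ℝ) :=
  {x | x ⬝ᵥ (Q⁻¹ *ᵥ x) ≤ 1}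

section aux
variable {n : ℕ}

lemma posSemidef_smul' {c : ℝ} (hc : 0 ≤ c) {M : Matrix (Fin n) (Fin n) ℝ}
    (hM : M.PosSemidef) : (c • M).PosSemidef := by
  refine posSemidef_iff_dotProduct_mulVec.mpr ⟨?_, fun x => ?_⟩
  · unfold Matrix.IsHermitian
    rw [conjTranspose_smul, hM.1.eq, star_trivial]
  · rw [smul_mulVec, dotProduct_smul, smul_eq_mul]
    have := hM.dotProduct_mulVec_nonneg x
    exact mul_nonneg hc this

lemma symm_dot {M : Matrix (Fin n) (Fin n) ℝ} (hM : M.IsHermitian)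
    (v w : Fin n → ℝ) : (M *ᵥ v) ⬝ᵥ w = v ⬝ᵥ (M *ᵥ w) := by
  have hsymm : Mᵀ = M := by
    have := hM.eq
    rwa [conjTranspose_eq_transpose_of_trivial] at this
  have h1 : w ᵥ* M = M *ᵥ w := by
    conv_lhs => rw [← hsymm]
    rw [vecMul_transpose]
  rw [dotProduct_comm (M *ᵥ v) w, dotProduct_mulVec, h1, dotProduct_comm]

lemma sum_dot' {ι : Type*} (s : Finset ι) (v : ι → Fin n → ℝ) (w : Fin n → ℝ) :
    (∑ i ∈ s, v i) ⬝ᵥ w = ∑ i ∈ s, v i ⬝ᵥ w := by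
  classical
  induction s using Finset.induction_on with
  | empty => simp
  | insert _ _ h ih => rw [Finset.sum_insert h, Finset.sum_insert h, add_dotProduct, ih]

lemma dot_mulVec_sum {ι : Type*} (s : Finset ι) (A : ι → Matrix (Fin n) (Fin n) ℝ)
    (u : Fin n → ℝ) :
    u ⬝ᵥ ((∑ i ∈ s, A i) *ᵥ u) = ∑ i ∈ s, u ⬝ᵥ (A i *ᵥ u) := by
  classical
  induction s using Finset.induction_on with
  | empty => simp
  | insert _ _ h ih => rw [Finset.sum_insert h, Finset.sum_insert h, Matrix.add_mulVec,
      dotProduct_add, ih]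

/-- Cauchy–Schwarz for the inner product of a positive definite matrix. -/
lemma cs_pd {A : Matrix (Fin n) (Fin n) ℝ} (hA : A.PosDef) (c u : Fin n → ℝ)
    (hc : c ⬝ᵥ (A⁻¹ *ᵥ c) ≤ 1) : c ⬝ᵥ u ≤ Real.sqrt (u ⬝ᵥ (A *ᵥ u)) := by
  by_cases hu : u = 0
  · simp [hu]
  have ha : 0 < u ⬝ᵥ (A *ᵥ u) := by simpa using hA.dotProduct_mulVec_pos hu
  set a := u ⬝ᵥ (A *ᵥ u) with ha_def
  set b := c ⬝ᵥ u with hb_def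
  have hdet : IsUnit A.det := isUnit_iff_ne_zero.mpr hA.det_pos.ne'
  have hcancel : A⁻¹ *ᵥ (A *ᵥ u) = u := by
    rw [Matrix.mulVec_mulVec, Matrix.nonsing_inv_mul _ hdet, Matrix.one_mulVec]
  have h0 : 0 ≤ (c - (b/a) • (A *ᵥ u)) ⬝ᵥ (A⁻¹ *ᵥ (c - (b/a) • (A *ᵥ u))) := by
    simpa using hA.inv.posSemidef.dotProduct_mulVec_nonneg (c - (b/a) • (A *ᵥ u))
  have hexp : A⁻¹ *ᵥ (c - (b/a) • (A *ᵥ u)) = A⁻¹ *ᵥ c - (b/a) • u := by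
    rw [Matrix.mulVec_sub, Matrix.mulVec_smul, hcancel]
  rw [hexp] at h0
  have h1 : (A *ᵥ u) ⬝ᵥ (A⁻¹ *ᵥ c) = b := by
    rw [symm_dot hA.1, Matrix.mulVec_mulVec, Matrix.mul_nonsing_inv _ hdet,
      Matrix.one_mulVec, dotProduct_comm]
  have h2 : (A *ᵥ u) ⬝ᵥ u = a := by rw [dotProduct_comm]
  simp only [sub_dotProduct, dotProduct_sub, smul_dotProduct, dotProduct_smul,
    smul_eq_mul, h1, h2, ← hb_def] at h0
  have hsimp : b / a * (b / a * a) = b / a * b := by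
    rw [div_mul_cancel₀ _ ha.ne']
  have hb2 : b ^ 2 ≤ a := by
    have key : b / a * b ≤ 1 := by nlinarith [h0, hc]
    have := (div_le_one ha).mp (by rw [div_mul_eq_mul_div] at key; simpa [sq] using key)
    nlinarith [this]
  exact Real.le_sqrt_of_sq_le hb2

lemma posSemidef_sum' {ι : Type*} (s : Finset ι) (A : ι → Matrix (Fin n) (Fin n) ℝ)
    (h : ∀ i ∈ s, (A i).PosSemidef) : (∑ i ∈ s, A i).PosSemidef :=
  Finset.sum_induction A _ (fun _ _ ha hb => ha.add hb) (Matrix.PosSemidef.zero) h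

lemma double_sum_symm {k : ℕ} (f : Fin k → Fin k → ℝ) (hf : ∀ i j, f i j = f j i) :
    ∑ i, ∑ j, f i j
      = ∑ i, f i i + ∑ i, ∑ j, (if i < j then 2 * f i j else 0) := by
  have hsplit : ∑ i, ∑ j, f i j =
      (∑ i, ∑ j, (if i < j then f i j else 0))
      + (∑ i, ∑ j, (if j < i then f i j else 0))
      + (∑ i, ∑ j, (if i = j then f i j else 0)) := by
    rw [← Finset.sum_add_distrib, ← Finset.sum_add_distrib]
    refine Finset.sum_congr rfl fun i _ => ?_
    rw [← Finset.sum_add_distrib, ← Finset.sum_add_distrib]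
    refine Finset.sum_congr rfl fun j _ => ?_
    rcases lt_trichotomy i j with h | h | h
    · simp [h, not_lt_of_gt h, h.ne]
    · simp [h]
    · simp [h, not_lt_of_gt h, (ne_of_lt h).symm]
  have h2 : (∑ i, ∑ j, (if j < i then f i j else 0))
      = ∑ i, ∑ j, (if i < j then f i j else 0) := by
    rw [Finset.sum_comm]
    refine Finset.sum_congr rfl fun i _ => Finset.sum_congr rfl fun j _ => ?_
    rw [hf]
  have h3 : (∑ i, ∑ j, (if i = j then f i j else 0)) = ∑ i, f i i := by
    refine Finset.sum_congr rfl fun i _ => ?_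
    simp
  rw [hsplit, h2, h3]
  have : ∑ i, ∑ j, (if i < j then 2 * f i j else 0)
      = ∑ i, ∑ j, ((if i < j then f i j else 0) + (if i < j then f i j else 0)) := by
    refine Finset.sum_congr rfl fun i _ => Finset.sum_congr rfl fun j _ => ?_
    split_ifs <;> ring
  rw [this]
  simp only [Finset.sum_add_distrib]
  ring

end aux

/-- The Minkowski sum `E(Q₁) ⊕ ⋯ ⊕ E(Q_k)` is contained in `E(Q)` with
`Q = Σᵢ Qᵢ + Σ_{i<j} (pᵢⱼ Qᵢ + pᵢⱼ⁻¹ Qⱼ)`. -/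
theorem stmt7 {n k : ℕ} (Q : Fin k → Matrix (Fin n) (Fin n) ℝ)
    (hQ : ∀ i, (Q i).PosDef) (p : Fin k → Fin k → ℝ)
    (hp : ∀ i j, i < j → 0 < p i j) :
    (∑ i, Ell (Q i)) ⊆
      Ell (∑ i, Q i + ∑ i, ∑ j, if i < j then p i j • Q i + (p i j)⁻¹ • Q j else 0) := by
  rcases Nat.eq_zero_or_pos k with hk | hk
  · subst hk
    intro x _
    simp [Ell]
  intro x hx
  rw [Set.mem_fintype_sum] at hx
  obtain ⟨c, hc, rfl⟩ := hx
  set S := ∑ i, Q i + ∑ i, ∑ j, if i < j then p i j • Q i + (p i j)⁻¹ • Q j else 0 with hS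
  -- S is positive definite
  have hterm : ∀ i j : Fin k,
      (if i < j then p i j • Q i + (p i j)⁻¹ • Q j else 0).PosSemidef := by
    intro i j
    split_ifs with h
    · exact (posSemidef_smul' (hp i j h).le (hQ i).posSemidef).add
        (posSemidef_smul' (inv_pos.mpr (hp i j h)).le (hQ j).posSemidef)
    · exact Matrix.PosSemidef.zero
  have hsum2 : (∑ i, ∑ j, if i < j then p i j • Q i + (p i j)⁻¹ • Q j else 0).PosSemidef :=
    posSemidef_sum' _ _ fun i _ => posSemidef_sum' _ _ fun j _ => hterm i j
  have hQsum : (∑ i, Q i).PosDef := by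
    obtain ⟨i₀⟩ : Nonempty (Fin k) := ⟨⟨0, hk⟩⟩
    rw [← Finset.add_sum_erase _ Q (Finset.mem_univ i₀)]
    exact (hQ i₀).add_posSemidef (posSemidef_sum' _ _ fun i _ => (hQ i).posSemidef)
  have hSpd : S.PosDef := hQsum.add_posSemidef hsum2
  have hdet : IsUnit S.det := isUnit_iff_ne_zero.mpr hSpd.det_pos.ne'
  set x := ∑ i, c i with hx_def
  set u := S⁻¹ *ᵥ x with hu_def
  show x ⬝ᵥ (S⁻¹ *ᵥ x) ≤ 1
  have hxu : S *ᵥ u = x := by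
    rw [hu_def, Matrix.mulVec_mulVec, Matrix.mul_nonsing_inv _ hdet, Matrix.one_mulVec]
  set a : Fin k → ℝ := fun i => u ⬝ᵥ (Q i *ᵥ u) with ha_def
  have ha_nonneg : ∀ i, 0 ≤ a i := fun i => by simpa using (hQ i).posSemidef.dotProduct_mulVec_nonneg u
  -- t = x ⬝ᵥ u
  have ht_le : x ⬝ᵥ u ≤ ∑ i, Real.sqrt (a i) := by
    rw [hx_def, sum_dot']
    exact Finset.sum_le_sum fun i _ => cs_pd (hQ i) (c i) u (hc i)
  have hquad : u ⬝ᵥ (S *ᵥ u) = x ⬝ᵥ u := by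
    rw [hxu, dotProduct_comm]
  have hquad_expand : u ⬝ᵥ (S *ᵥ u)
      = ∑ i, a i + ∑ i, ∑ j, (if i < j then p i j * a i + (p i j)⁻¹ * a j else 0) := by
    rw [hS, Matrix.add_mulVec, dotProduct_add, dot_mulVec_sum, dot_mulVec_sum]
    congr 1
    refine Finset.sum_congr rfl fun i _ => ?_
    rw [dot_mulVec_sum]
    refine Finset.sum_congr rfl fun j _ => ?_
    split_ifs with h
    · rw [Matrix.add_mulVec, dotProduct_add, smul_mulVec, smul_mulVec,
        dotProduct_smul, dotProduct_smul, smul_eq_mul, smul_eq_mul]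
    · simp
  have hsq : (∑ i, Real.sqrt (a i)) ^ 2 ≤ u ⬝ᵥ (S *ᵥ u) := by
    rw [hquad_expand]
    have hexpand : (∑ i, Real.sqrt (a i)) ^ 2
        = ∑ i, ∑ j, Real.sqrt (a i) * Real.sqrt (a j) := by
      rw [sq, Finset.sum_mul_sum]
    rw [hexpand, double_sum_symm (fun i j => Real.sqrt (a i) * Real.sqrt (a j))
      (fun i j => mul_comm _ _)]
    have hdiag : ∑ i, Real.sqrt (a i) * Real.sqrt (a i) = ∑ i, a i :=
      Finset.sum_congr rfl fun i _ => Real.mul_self_sqrt (ha_nonneg i)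
    rw [hdiag]
    refine add_le_add_right (Finset.sum_le_sum fun i _ => Finset.sum_le_sum fun j _ => ?_) _
    split_ifs with h
    · have hpij := hp i j h
      have hsi := Real.sqrt_nonneg (a i)
      have hsj := Real.sqrt_nonneg (a j)
      have hsi2 : Real.sqrt (a i) ^ 2 = a i := Real.sq_sqrt (ha_nonneg i)
      have hsj2 : Real.sqrt (a j) ^ 2 = a j := Real.sq_sqrt (ha_nonneg j)
      have e1 : p i j ^ 2 * (Real.sqrt (a i) * Real.sqrt (a i)) = p i j ^ 2 * a i := by
        rw [Real.mul_self_sqrt (ha_nonneg i)]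
      have e2 : Real.sqrt (a j) * Real.sqrt (a j) = a j := Real.mul_self_sqrt (ha_nonneg j)
      have e3 : (p i j)⁻¹ * a j * p i j = a j := by field_simp
      have key : 2 * (Real.sqrt (a i) * Real.sqrt (a j)) * p i j
          ≤ (p i j * a i + (p i j)⁻¹ * a j) * p i j := by
        nlinarith [sq_nonneg (p i j * Real.sqrt (a i) - Real.sqrt (a j)), e1, e2, e3]
      exact le_of_mul_le_mul_right key hpij
    · exact le_refl _
  rw [hquad] at hsq
  have hm : 0 ≤ ∑ i, Real.sqrt (a i) := Finset.sum_nonneg fun i _ => Real.sqrt_nonneg _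
  nlinarith [ht_le, hsq, hm, sq_nonneg ((∑ i, Real.sqrt (a i)) - 1)]
end

section
/- For positive definite Q₁,…,Q_k, the matrix Q* = (Σ_i √tr(Q_i))(Σ_i Q_i/√tr(Q_i)) is positive definite and satisfies E(Q₁) ⊕ ⋯ ⊕ E(Q_k) ⊆ E(Q*). -/
open Matrix Pointwise Finset

lemma dot_sum_right {n k : ℕ} (v : Fin n → ℝ) (f : Fin k → (Fin n → ℝ)) :
    v ⬝ᵥ (∑ i, f i) = ∑ i, v ⬝ᵥ f i := by
  simp [dotProduct, Finset.mul_sum]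
  exact Finset.sum_comm

lemma sum_mulVec' {n k : ℕ} (A : Fin k → Matrix (Fin n) (Fin n) ℝ) (y : Fin n → ℝ) :
    (∑ i, A i) *ᵥ y = ∑ i, A i *ᵥ y := by
  funext j
  simp only [mulVec, dotProduct, Matrix.sum_apply, Finset.sum_apply, Finset.sum_mul]
  exact Finset.sum_comm

lemma key_ineq {n : ℕ} {A : Matrix (Fin n) (Fin n) ℝ} (hA : A.PosDef)
    (x z : Fin n → ℝ) :
    2 * (z ⬝ᵥ x) - z ⬝ᵥ (A *ᵥ z) ≤ x ⬝ᵥ (A⁻¹ *ᵥ x) := by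
  have := hA.isUnit.invertible
  have hAt : Aᵀ = A := by
    have h := hA.isHermitian
    simpa [Matrix.IsHermitian, conjTranspose_eq_transpose_of_trivial] using h
  have hsymm : ∀ u v : Fin n → ℝ, u ⬝ᵥ (A *ᵥ v) = v ⬝ᵥ (A *ᵥ u) := by
    intro u v
    rw [dotProduct_mulVec, ← mulVec_transpose, hAt, dotProduct_comm]
  set y := A⁻¹ *ᵥ x with hy
  have hAy : A *ᵥ y = x := by
    rw [hy, mulVec_mulVec, Matrix.mul_nonsing_inv _ (isUnit_iff_isUnit_det _ |>.1 hA.isUnit),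
      one_mulVec]
  have h0 : 0 ≤ (z - y) ⬝ᵥ (A *ᵥ (z - y)) := by
    have := hA.posSemidef.dotProduct_mulVec_nonneg (z - y)
    simpa using this
  have hexp : (z - y) ⬝ᵥ (A *ᵥ (z - y)) =
      z ⬝ᵥ (A *ᵥ z) - 2 * (z ⬝ᵥ x) + x ⬝ᵥ y := by
    rw [mulVec_sub, sub_dotProduct, dotProduct_sub, dotProduct_sub]
    have h1 : y ⬝ᵥ (A *ᵥ z) = z ⬝ᵥ (A *ᵥ y) := hsymm y z
    rw [h1, hAy]
    have h4 : y ⬝ᵥ x = x ⬝ᵥ y := dotProduct_comm y x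
    linarith [h4]
  linarith [h0, hexp.symm ▸ h0]

/-- `Q* = (Σᵢ √tr Qᵢ)(Σᵢ Qᵢ/√tr Qᵢ)` is positive definite and
`E(Q₁) ⊕ ⋯ ⊕ E(Q_k) ⊆ E(Q*)`. -/
theorem stmt13 {n k : ℕ} (hk : 0 < k) (Q : Fin k → Matrix (Fin n) (Fin n) ℝ)
    (hQ : ∀ i, (Q i).PosDef)
    (Qstar : Matrix (Fin n) (Fin n) ℝ)
    (hQstar : Qstar = (∑ i, Real.sqrt (Q i).trace) • ∑ i, (Real.sqrt (Q i).trace)⁻¹ • Q i) :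
    Qstar.PosDef ∧ (∑ i, Ell (Q i)) ⊆ Ell Qstar := by
  have hkne : Nonempty (Fin k) := ⟨⟨0, hk⟩⟩
  by_cases hn : n = 0
  · subst hn
    constructor
    · refine ⟨?_, fun x hx => ?_⟩
      · ext i j
        exact i.elim0
      · exact absurd (Finsupp.ext fun i => i.elim0) hx
    · intro x _
      show x ⬝ᵥ (Qstar⁻¹ *ᵥ x) ≤ 1
      simp [dotProduct]
  · have hnpos : 0 < n := Nat.pos_of_ne_zero hn
    have hne : Nonempty (Fin n) := ⟨⟨0, hnpos⟩⟩
    set t : Fin k → ℝ := fun i => Real.sqrt (Q i).trace with htdef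
    have htr : ∀ i, 0 < (Q i).trace := by
      intro i
      rw [Matrix.trace]
      refine Finset.sum_pos (fun j _ => ?_) Finset.univ_nonempty
      have hsingle : (Pi.single j 1 : Fin n → ℝ) ≠ 0 := by
        intro h
        have := congrFun h j
        simp at this
      have h := (hQ i).dotProduct_mulVec_pos hsingle
      simpa [Matrix.diag, mulVec_single, single_dotProduct] using h
    have ht : ∀ i, 0 < t i := fun i => Real.sqrt_pos.mpr (htr i)
    set s : ℝ := ∑ i, t i with hsdef
    have hs : 0 < s := Finset.sum_pos (fun i _ => ht i) Finset.univ_nonempty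
    have hform : ∀ y : Fin n → ℝ,
        y ⬝ᵥ (Qstar *ᵥ y) = ∑ i, s * (t i)⁻¹ * (y ⬝ᵥ (Q i *ᵥ y)) := by
      intro y
      rw [hQstar, smul_mulVec, dotProduct_smul, sum_mulVec', dot_sum_right,
        Finset.smul_sum]
      refine Finset.sum_congr rfl fun i _ => ?_
      rw [smul_mulVec, dotProduct_smul]
      simp [mul_assoc]
      exact Or.inl (Or.inl rfl)
    have hsymQ : ∀ l i j, Q l j i = Q l i j := by
      intro l i j
      have h := (hQ l).1
      have := congrFun (congrFun h i) j
      simpa [Matrix.conjTranspose_apply] using this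
    have hherm : Qstar.IsHermitian := by
      rw [hQstar]
      show _ᴴ = _
      ext i j
      simp only [Matrix.conjTranspose_apply, Matrix.smul_apply, Matrix.sum_apply,
        smul_eq_mul, star_trivial]
      congr 1
      exact Finset.sum_congr rfl fun l _ => by rw [hsymQ l i j]
    have hPD : Qstar.PosDef := by
      refine Matrix.PosDef.of_dotProduct_mulVec_pos hherm fun x hx => ?_
      have hx' : ∀ i : Fin k, 0 < x ⬝ᵥ (Q i *ᵥ x) := by
        intro i
        have h := (hQ i).dotProduct_mulVec_pos hx
        simpa using h
      have : (0:ℝ) < ∑ i, s * (t i)⁻¹ * (x ⬝ᵥ (Q i *ᵥ x)) := by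
        refine Finset.sum_pos (fun i _ => ?_) Finset.univ_nonempty
        exact mul_pos (mul_pos hs (inv_pos.mpr (ht i))) (hx' i)
      calc (0:ℝ) < ∑ i, s * (t i)⁻¹ * (x ⬝ᵥ (Q i *ᵥ x)) := this
        _ = x ⬝ᵥ (Qstar *ᵥ x) := (hform x).symm
        _ = star x ⬝ᵥ (Qstar *ᵥ x) := by simp
    refine ⟨hPD, ?_⟩
    intro x hx
    rw [Set.mem_fintype_sum] at hx
    obtain ⟨g, hg, hgx⟩ := hx
    have := hPD.isUnit.invertible
    show x ⬝ᵥ (Qstar⁻¹ *ᵥ x) ≤ 1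
    set y := Qstar⁻¹ *ᵥ x with hy
    have hQy : Qstar *ᵥ y = x := by
      rw [hy, mulVec_mulVec, Matrix.mul_nonsing_inv _ (isUnit_iff_isUnit_det _ |>.1 hPD.isUnit),
        one_mulVec]
    have hsum1 : ∑ i, t i / s = 1 := by
      rw [← Finset.sum_div, ← hsdef, div_self hs.ne']
    have hterm : ∀ i : Fin k,
        2 * (y ⬝ᵥ g i) - s * (t i)⁻¹ * (y ⬝ᵥ (Q i *ᵥ y)) ≤ t i / s := by
      intro i
      have hkey := key_ineq (hQ i) (g i) ((s * (t i)⁻¹) • y)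
      have hgi : g i ⬝ᵥ ((Q i)⁻¹ *ᵥ g i) ≤ 1 := hg i
      rw [smul_dotProduct, mulVec_smul, dotProduct_smul, smul_dotProduct] at hkey
      simp only [smul_eq_mul] at hkey
      set c := s * (t i)⁻¹ with hc'
      have hc : 0 < c := mul_pos hs (inv_pos.mpr (ht i))
      have h1c : t i / s = c⁻¹ := by
        rw [hc', mul_inv, inv_inv, div_eq_mul_inv, mul_comm]
      rw [h1c]
      have hcc : c * c⁻¹ = 1 := mul_inv_cancel₀ hc.ne'
      nlinarith [hkey, hgi, hc, hcc]
    calc x ⬝ᵥ (Qstar⁻¹ *ᵥ x) = y ⬝ᵥ x := dotProduct_comm x y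
      _ = 2 * (y ⬝ᵥ x) - y ⬝ᵥ (Qstar *ᵥ y) := by rw [hQy]; ring
      _ = ∑ i, (2 * (y ⬝ᵥ g i) - s * (t i)⁻¹ * (y ⬝ᵥ (Q i *ᵥ y))) := by
          rw [hform y, ← hgx, dot_sum_right, Finset.mul_sum, ← Finset.sum_sub_distrib]
      _ ≤ ∑ i, t i / s := Finset.sum_le_sum fun i _ => hterm i
      _ = 1 := hsum1
end
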